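/- (AggreVaTe-style bound combination) Suppose for each iteration i = 1,...,N the learner π_i satisfies V(π_i) - V(π̃_OR) ≥ Σ_{t=1}^T E_{ψ_t~P(ψ|π_mix^i,t)}[\tilde{Q}^{OR}_{T-t+1}(ψ_t,π_i(ψ_t)) - max_a \tilde{Q}^{OR}_{T-t+1}(ψ_t,a)] - R·T·min(1, T·β_i) + T·ε̃, where β_i = (1-α)^{i-1}. Define the average classification error ε_cs = (1/N)Σ_i E_{t~U(1:T),ψ_t~P(ψ|π_mix^i,t)}[max_a \tilde{Q}^{OR}_{T-t+1}(ψ_t,a) - \tilde{Q}^{OR}_{T-t+1}(ψ_t,π_i(ψ_t))]. Then the average learner π̄ = (1/N)Σπ_i satisfies V(π̄) - V(π̃_OR) ≥ -T·ε_cs - (R·T/N)·(log T + 2)/α + T·ε̃. -/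

import Mathlib

open Finset

lemma geom_tail_le (α : ℝ) (hα0 : 0 < α) (hα1 : α < 1) (M : ℕ) :
    ∑ j ∈ Finset.range M, (1 - α) ^ j ≤ 1 / α := by
  have h1 : (1 - α) ≠ 1 := by linarith
  rw [geom_sum_eq h1]
  have hpow : 0 ≤ (1 - α) ^ M := pow_nonneg (by linarith) M
  have e : ((1 - α) ^ M - 1) / (1 - α - 1) = (1 - (1 - α) ^ M) / α := by
    rw [div_eq_div_iff (by linarith) hα0.ne']
    ring
  rw [e]
  gcongr
  linarith

lemma sum_min_le (N T : ℕ) (hT : 1 ≤ T) (α : ℝ) (hα0 : 0 < α) (hα1 : α < 1) :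
    ∑ i ∈ Finset.range N, min 1 ((T : ℝ) * (1 - α) ^ i) ≤ (Real.log T + 2) / α := by
  have hT0 : (0:ℝ) < T := by exact_mod_cast hT
  have hL : 0 ≤ Real.log T := Real.log_nonneg (by exact_mod_cast hT)
  set L := Real.log T with hLdef
  set n₀ := ⌈L / α⌉₊ with hn
  have hr0 : (0:ℝ) ≤ 1 - α := by linarith
  have h1a : 1 ≤ 1 / α := by rw [le_div_iff₀ hα0]; linarith
  have hn0 : (n₀ : ℝ) ≤ L / α + 1 := (Nat.ceil_lt_add_one (div_nonneg hL hα0.le)).le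
  -- key: T * (1-α)^n₀ ≤ 1
  have hkey : (T:ℝ) * (1 - α) ^ n₀ ≤ 1 := by
    have h1 : (1 - α) ≤ Real.exp (-α) := by
      have := Real.add_one_le_exp (-α); linarith
    have h2 : (1 - α) ^ n₀ ≤ Real.exp (-α) ^ n₀ := pow_le_pow_left₀ hr0 h1 n₀
    have h3 : Real.exp (-α) ^ n₀ = Real.exp ((n₀:ℝ) * (-α)) := by
      rw [← Real.exp_nat_mul, mul_comm]
    have h4 : (n₀:ℝ) * (-α) ≤ -L := by
      have hc : L / α ≤ (n₀:ℝ) := Nat.le_ceil _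
      have := (div_le_iff₀ hα0).mp hc
      nlinarith
    have h5 : Real.exp ((n₀:ℝ) * (-α)) ≤ Real.exp (-L) := Real.exp_le_exp.mpr h4
    have h6 : Real.exp (-L) = 1 / T := by
      rw [Real.exp_neg, Real.exp_log hT0, one_div]
    have h7 : (1 - α) ^ n₀ ≤ 1 / T := by
      calc (1 - α) ^ n₀ ≤ Real.exp (-α) ^ n₀ := h2
        _ = Real.exp ((n₀:ℝ) * (-α)) := h3
        _ ≤ Real.exp (-L) := h5
        _ = 1 / T := h6
    calc (T:ℝ) * (1 - α) ^ n₀ ≤ T * (1 / T) := by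
          exact mul_le_mul_of_nonneg_left h7 hT0.le
      _ = 1 := by field_simp
  have hfinal : (L + 2) / α = L / α + 1 / α + 1 / α := by ring
  rcases le_or_gt N n₀ with hle | hlt
  · calc ∑ i ∈ Finset.range N, min 1 ((T : ℝ) * (1 - α) ^ i)
        ≤ ∑ i ∈ Finset.range N, 1 := Finset.sum_le_sum fun i _ => min_le_left _ _
      _ = (N : ℝ) := by simp
      _ ≤ (n₀ : ℝ) := by exact_mod_cast hle
      _ ≤ (L + 2) / α := by rw [hfinal]; linarith
  · have hsplit : ∑ i ∈ Finset.range N, min 1 ((T : ℝ) * (1 - α) ^ i)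
        = ∑ i ∈ Finset.range n₀, min 1 ((T : ℝ) * (1 - α) ^ i)
          + ∑ i ∈ Finset.Ico n₀ N, min 1 ((T : ℝ) * (1 - α) ^ i) := by
      rw [Finset.range_eq_Ico, ← Finset.sum_Ico_consecutive _ (Nat.zero_le n₀) hlt.le,
        ← Finset.range_eq_Ico]
    have hb1 : ∑ i ∈ Finset.range n₀, min 1 ((T : ℝ) * (1 - α) ^ i) ≤ (n₀ : ℝ) := by
      calc ∑ i ∈ Finset.range n₀, min 1 ((T : ℝ) * (1 - α) ^ i)
          ≤ ∑ i ∈ Finset.range n₀, 1 := Finset.sum_le_sum fun i _ => min_le_left _ _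
        _ = (n₀ : ℝ) := by simp
    have hb2 : ∑ i ∈ Finset.Ico n₀ N, min 1 ((T : ℝ) * (1 - α) ^ i) ≤ 1 / α := by
      have hterm : ∀ i ∈ Finset.Ico n₀ N,
          min 1 ((T : ℝ) * (1 - α) ^ i) ≤ (1 - α) ^ (i - n₀) := by
        intro i hi
        have hin : n₀ ≤ i := (Finset.mem_Ico.mp hi).1
        have : (T : ℝ) * (1 - α) ^ i = ((T:ℝ) * (1 - α) ^ n₀) * (1 - α) ^ (i - n₀) := by
          rw [mul_assoc, ← pow_add, Nat.add_sub_cancel' hin]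
        calc min 1 ((T : ℝ) * (1 - α) ^ i) ≤ (T : ℝ) * (1 - α) ^ i := min_le_right _ _
          _ = ((T:ℝ) * (1 - α) ^ n₀) * (1 - α) ^ (i - n₀) := this
          _ ≤ 1 * (1 - α) ^ (i - n₀) :=
              mul_le_mul_of_nonneg_right hkey (pow_nonneg hr0 _)
          _ = (1 - α) ^ (i - n₀) := one_mul _
      calc ∑ i ∈ Finset.Ico n₀ N, min 1 ((T : ℝ) * (1 - α) ^ i)
          ≤ ∑ i ∈ Finset.Ico n₀ N, (1 - α) ^ (i - n₀) := Finset.sum_le_sum hterm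
        _ = ∑ j ∈ Finset.range (N - n₀), (1 - α) ^ j := by
            rw [Finset.sum_Ico_eq_sum_range]
            exact Finset.sum_congr rfl fun j _ => by rw [Nat.add_sub_cancel_left]
        _ ≤ 1 / α := geom_tail_le α hα0 hα1 _
    rw [hsplit, hfinal]
    linarith

/-- AggreVaTe bound combination: given the per-iteration performance-difference
bounds for learners `π_i` (rolled in with mixtures `π_mix^i` using
`β_i = (1-α)^(i-1)`, here 0-indexed as `(1-α)^i`), and the definition of the
average cost-sensitive classification error `ε_cs`, the uniform mixture `π̄` of the
learners satisfies
`V(π̄) - V(π̃_OR) ≥ -T ε_cs - (R T / N)(log T + 2)/α + T ε̃`. -/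
theorem aggrevate_bound_combination {Ψ A : Type*} [Fintype Ψ] [Fintype A]
    [Nonempty Ψ] [Nonempty A]
    (N T : ℕ) (hN : 1 ≤ N) (hT : 1 ≤ T)
    (α : ℝ) (hα0 : 0 < α) (hα1 : α < 1)
    (R : ℝ) (hR : 0 ≤ R)
    (dist : ℕ → ℕ → Ψ → ℝ)
    (hd0 : ∀ i t ψ, 0 ≤ dist i t ψ) (hd1 : ∀ i t, ∑ ψ, dist i t ψ = 1)
    (Q : ℕ → Ψ → A → ℝ) (πi : ℕ → Ψ → A) (Vi : ℕ → ℝ) (VOR εtilde : ℝ)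
    (hbound : ∀ i ∈ Finset.range N,
      Vi i - VOR ≥ (∑ t ∈ Finset.range T, ∑ ψ, dist i t ψ *
          (Q (T - t) ψ (πi i ψ) -
            Finset.univ.sup' Finset.univ_nonempty fun a => Q (T - t) ψ a))
        - R * T * min 1 ((T : ℝ) * (1 - α) ^ i) + T * εtilde)
    (εcs : ℝ)
    (hεcs : εcs = (1 / (N : ℝ)) * ∑ i ∈ Finset.range N,
      (1 / (T : ℝ)) * ∑ t ∈ Finset.range T, ∑ ψ, dist i t ψ *
        ((Finset.univ.sup' Finset.univ_nonempty fun a => Q (T - t) ψ a)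
          - Q (T - t) ψ (πi i ψ)))
    (Vavg : ℝ) (hVavg : Vavg = (1 / (N : ℝ)) * ∑ i ∈ Finset.range N, Vi i) :
    Vavg - VOR ≥ -(T : ℝ) * εcs
      - (R * T / N) * ((Real.log T + 2) / α) + T * εtilde := by
  have hNpos : (0:ℝ) < N := by exact_mod_cast hN
  have hTpos : (0:ℝ) < T := by exact_mod_cast hT
  set S : ℕ → ℝ := fun i => ∑ t ∈ Finset.range T, ∑ ψ, dist i t ψ *
      (Q (T - t) ψ (πi i ψ) -
        Finset.univ.sup' Finset.univ_nonempty fun a => Q (T - t) ψ a) with hSdef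
  -- inner sum in εcs equals -S i
  have key : ∀ i, (∑ t ∈ Finset.range T, ∑ ψ, dist i t ψ *
      ((Finset.univ.sup' Finset.univ_nonempty fun a => Q (T - t) ψ a)
        - Q (T - t) ψ (πi i ψ))) = - S i := by
    intro i
    rw [hSdef, ← Finset.sum_neg_distrib]
    refine Finset.sum_congr rfl fun t _ => ?_
    rw [← Finset.sum_neg_distrib]
    exact Finset.sum_congr rfl fun ψ _ => by ring
  have hSsum : ∑ i ∈ Finset.range N, S i = -((N:ℝ) * T * εcs) := by
    rw [hεcs]
    simp only [key]
    simp only [mul_neg, Finset.sum_neg_distrib, ← Finset.mul_sum]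
    field_simp
  -- sum the bounds
  have hsum : ∑ i ∈ Finset.range N, ((S i)
        - R * T * min 1 ((T : ℝ) * (1 - α) ^ i) + T * εtilde)
      ≤ ∑ i ∈ Finset.range N, (Vi i - VOR) :=
    Finset.sum_le_sum hbound
  have hexp : ∑ i ∈ Finset.range N, ((S i)
        - R * T * min 1 ((T : ℝ) * (1 - α) ^ i) + T * εtilde)
      = (∑ i ∈ Finset.range N, S i)
        - R * T * (∑ i ∈ Finset.range N, min 1 ((T : ℝ) * (1 - α) ^ i))
        + (N : ℝ) * (T * εtilde) := by
    rw [Finset.sum_add_distrib, Finset.sum_sub_distrib, ← Finset.mul_sum,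
      Finset.sum_const, Finset.card_range, nsmul_eq_mul]
  have hmin := sum_min_le N T hT α hα0 hα1
  have hRT : 0 ≤ R * T := mul_nonneg hR hTpos.le
  have hVsum : ∑ i ∈ Finset.range N, (Vi i - VOR)
      = (∑ i ∈ Finset.range N, Vi i) - (N : ℝ) * VOR := by
    rw [Finset.sum_sub_distrib, Finset.sum_const, Finset.card_range, nsmul_eq_mul]
  have hfin : (∑ i ∈ Finset.range N, Vi i) - (N : ℝ) * VOR
      ≥ -((N:ℝ) * T * εcs) - R * T * ((Real.log T + 2) / α) + (N : ℝ) * (T * εtilde) := by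
    rw [← hVsum]
    refine le_trans ?_ hsum
    rw [hexp, hSsum]
    have : R * T * (∑ i ∈ Finset.range N, min 1 ((T : ℝ) * (1 - α) ^ i))
        ≤ R * T * ((Real.log T + 2) / α) := mul_le_mul_of_nonneg_left hmin hRT
    linarith
  rw [hVavg, ge_iff_le, ← mul_le_mul_iff_right₀ hNpos]
  have e1 : (N:ℝ) * ((1 / (N:ℝ)) * (∑ i ∈ Finset.range N, Vi i) - VOR)
      = (∑ i ∈ Finset.range N, Vi i) - (N : ℝ) * VOR := by
    field_simp
  have e2 : (N:ℝ) * (-(T : ℝ) * εcs - (R * T / N) * ((Real.log T + 2) / α) + T * εtilde)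
      = -((N:ℝ) * T * εcs) - R * T * ((Real.log T + 2) / α) + (N : ℝ) * (T * εtilde) := by
    field_simp
  rw [e1, e2]
  exact hfin
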